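/- Consider the time-varying MPC setup: fix real matrices A (n×n), B (n×m), a horizon T ≥ 1, a real δ ∈ [0,1), and sequences (Q_t)_{t∈ℕ} of symmetric positive definite n×n matrices and (R_t)_{t∈ℕ} of symmetric positive definite m×m matrices satisfying (1−δ)Q_t ⪯ Q_{t+1} ⪯ (1+δ)Q_t and (1−δ)R_t ⪯ R_{t+1} ⪯ (1+δ)R_t for all t. For weights (Q,R) let P_k(Q,R) be the Riccati iterates with P_0 = 0 and P_{k+1} = AᵀP_kA − AᵀP_kB(BᵀP_kB+R)⁻¹BᵀP_kA + Q, and let the MPC closed-loop trajectory from x_0 be x_{t+1} = Ax_t + Bû_t with û_t = −(BᵀP_{T−1}(Q_t,R_t)B+R_t)⁻¹BᵀP_{T−1}(Q_t,R_t)A x_t. Suppose ρ ∈ (0,1) satisfies ρ·P_T(Q_t,R_t) ⪯ Q_t for all t, α > 1 satisfies P_T(Q_t,R_t) ⪯ α·P_{T−1}(Q_t,R_t) for all t, and that γ = (1−ρ)α/(1−δ) < 1. Suppose moreover there is a symmetric positive definite matrix Q̲ with Q̲ ⪯ Q_t for all t. Then the MPC closed-loop trajectory converges to the origin: x_t → 0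 as t → ∞. -/

import Mathlib

open Matrix

/-- The finite-horizon Riccati iteration with `P 0 = 0` and
`P (k+1) = AᵀP_kA − AᵀP_kB(BᵀP_kB+R)⁻¹BᵀP_kA + Q`. -/
noncomputable def riccati {n m : ℕ} (A : Matrix (Fin n) (Fin n) ℝ)
    (B : Matrix (Fin n) (Fin m) ℝ) (Q : Matrix (Fin n) (Fin n) ℝ)
    (R : Matrix (Fin m) (Fin m) ℝ) : ℕ → Matrix (Fin n) (Fin n) ℝ
  | 0 => 0
  | k + 1 =>
      Aᵀ * riccati A B Q R k * A -
        Aᵀ * riccati A B Q R k * B * (Bᵀ * riccati A B Q R k * B + R)⁻¹ *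
          Bᵀ * riccati A B Q R k * A + Q

/-- The Loewner order on real square matrices: `X ⪯ Y` iff `Y − X` is positive semidefinite. -/
def loewnerLE {n : ℕ} (X Y : Matrix (Fin n) (Fin n) ℝ) : Prop := (Y - X).PosSemidef

namespace MPCAux

variable {n m : ℕ}

lemma cross_dp (M : Matrix (Fin n) (Fin m) ℝ) (v : Fin n → ℝ) (w : Fin m → ℝ) :
    (M *ᵥ w) ⬝ᵥ v = w ⬝ᵥ (Mᵀ *ᵥ v) := by
  rw [← Matrix.vecMul_transpose, Matrix.dotProduct_mulVec]

lemma qf_smul (M : Matrix (Fin n) (Fin n) ℝ) (c : ℝ) (x : Fin n → ℝ) :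
    x ⬝ᵥ ((c • M) *ᵥ x) = c * (x ⬝ᵥ (M *ᵥ x)) := by
  simp [Matrix.smul_mulVec, dotProduct_smul]

lemma loewner_qf {X Y : Matrix (Fin n) (Fin n) ℝ} (h : loewnerLE X Y) (x : Fin n → ℝ) :
    x ⬝ᵥ (X *ᵥ x) ≤ x ⬝ᵥ (Y *ᵥ x) := by
  have := h.dotProduct_mulVec_nonneg x
  simp only [star_trivial, Matrix.sub_mulVec, dotProduct_sub] at this
  linarith

/-- Completion of squares. -/
lemma complete_square (A : Matrix (Fin n) (Fin n) ℝ) (B : Matrix (Fin n) (Fin m) ℝ)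
    (Q P : Matrix (Fin n) (Fin n) ℝ) (R : Matrix (Fin m) (Fin m) ℝ)
    (hP : Pᵀ = P) (hR : Rᵀ = R)
    (hS1 : (Bᵀ * P * B + R) * (Bᵀ * P * B + R)⁻¹ = 1)
    (hS2 : (Bᵀ * P * B + R)⁻¹ * (Bᵀ * P * B + R) = 1)
    (x : Fin n → ℝ) (u : Fin m → ℝ) :
    x ⬝ᵥ ((Aᵀ * P * A - Aᵀ * P * B * (Bᵀ * P * B + R)⁻¹ * Bᵀ * P * A + Q) *ᵥ x)
      + (u + ((Bᵀ * P * B + R)⁻¹ * Bᵀ * P * A) *ᵥ x) ⬝ᵥ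
          ((Bᵀ * P * B + R) *ᵥ (u + ((Bᵀ * P * B + R)⁻¹ * Bᵀ * P * A) *ᵥ x))
    = x ⬝ᵥ (Q *ᵥ x) + u ⬝ᵥ (R *ᵥ u)
      + (A *ᵥ x + B *ᵥ u) ⬝ᵥ (P *ᵥ (A *ᵥ x + B *ᵥ u)) := by
  set S := Bᵀ * P * B + R with hSdef
  have hSsym : Sᵀ = S := by
    simp [hSdef, Matrix.transpose_add, Matrix.transpose_mul, Matrix.mul_assoc, hP, hR]
  have hSinvsym : (S⁻¹)ᵀ = S⁻¹ := by
    rw [Matrix.transpose_nonsing_inv, hSsym]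
  set K := S⁻¹ * Bᵀ * P * A with hKdef
  have hSK : S * K = Bᵀ * P * A := by
    rw [hKdef, ← Matrix.mul_assoc, ← Matrix.mul_assoc, ← Matrix.mul_assoc, hS1, Matrix.one_mul]
  have hKT : Kᵀ = Aᵀ * P * B * S⁻¹ := by
    simp [hKdef, Matrix.transpose_mul, Matrix.mul_assoc, hP, hSinvsym]
  have hKTS : Kᵀ * S = Aᵀ * P * B := by
    rw [hKT, Matrix.mul_assoc, hS2, Matrix.mul_one]
  simp only [Matrix.mulVec_add, Matrix.add_mulVec, Matrix.sub_mulVec, dotProduct_add,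
    add_dotProduct, dotProduct_sub, sub_dotProduct, Matrix.mulVec_mulVec]
  have e1 : (K *ᵥ x) ⬝ᵥ (S *ᵥ u) = x ⬝ᵥ ((Kᵀ * S) *ᵥ u) := by
    rw [cross_dp, Matrix.mulVec_mulVec]
  have e2 : (K *ᵥ x) ⬝ᵥ ((S * K) *ᵥ x) = x ⬝ᵥ ((Kᵀ * (S * K)) *ᵥ x) := by
    rw [cross_dp, Matrix.mulVec_mulVec]
  have e3 : (A *ᵥ x) ⬝ᵥ ((P * A) *ᵥ x) = x ⬝ᵥ ((Aᵀ * P * A) *ᵥ x) := by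
    rw [cross_dp, Matrix.mulVec_mulVec, Matrix.mul_assoc]
  have e4 : (A *ᵥ x) ⬝ᵥ ((P * B) *ᵥ u) = x ⬝ᵥ ((Aᵀ * P * B) *ᵥ u) := by
    rw [cross_dp, Matrix.mulVec_mulVec, Matrix.mul_assoc]
  have e5 : (B *ᵥ u) ⬝ᵥ ((P * A) *ᵥ x) = u ⬝ᵥ ((Bᵀ * P * A) *ᵥ x) := by
    rw [cross_dp, Matrix.mulVec_mulVec, Matrix.mul_assoc]
  have e6 : (B *ᵥ u) ⬝ᵥ ((P * B) *ᵥ u) = u ⬝ᵥ ((Bᵀ * P * B) *ᵥ u) := by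
    rw [cross_dp, Matrix.mulVec_mulVec, Matrix.mul_assoc]
  have e7 : u ⬝ᵥ (S *ᵥ u) = u ⬝ᵥ ((Bᵀ * P * B) *ᵥ u) + u ⬝ᵥ (R *ᵥ u) := by
    rw [hSdef, Matrix.add_mulVec, dotProduct_add]
  have e10 : x ⬝ᵥ ((Kᵀ * S) *ᵥ u) = x ⬝ᵥ ((Aᵀ * P * B) *ᵥ u) := by rw [hKTS]
  have e11 : x ⬝ᵥ ((Kᵀ * (S * K)) *ᵥ x)
      = x ⬝ᵥ ((Aᵀ * P * B * (S⁻¹ * Bᵀ * P * A)) *ᵥ x) := by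
    rw [hSK, hKT]
    congr 2
    simp [Matrix.mul_assoc]
  have e12 : x ⬝ᵥ ((Aᵀ * P * B * S⁻¹ * Bᵀ * P * A) *ᵥ x)
      = x ⬝ᵥ ((Aᵀ * P * B * (S⁻¹ * Bᵀ * P * A)) *ᵥ x) := by
    congr 2; simp [Matrix.mul_assoc]
  have e13 : u ⬝ᵥ ((Aᵀ * P * B)ᵀ *ᵥ x) = x ⬝ᵥ ((Aᵀ * P * B) *ᵥ u) := by
    rw [← cross_dp, dotProduct_comm]
  have e14 : (Aᵀ * P * B)ᵀ = Bᵀ * P * A := by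
    simp [Matrix.transpose_mul, Matrix.mul_assoc, hP]
  rw [e3, e4, e5, e6, e7, e1, e2, e10, e11, e12, hSK]
  rw [← e14, e13]
  ring

variable (A : Matrix (Fin n) (Fin n) ℝ) (B : Matrix (Fin n) (Fin m) ℝ)
variable {Q : Matrix (Fin n) (Fin n) ℝ} {R : Matrix (Fin m) (Fin m) ℝ}

lemma symm_of_herm {k : ℕ} {M : Matrix (Fin k) (Fin k) ℝ} (h : M.IsHermitian) : Mᵀ = M := by
  rw [← Matrix.conjTranspose_eq_transpose_of_trivial]; exact h

lemma riccati_symm (hQ : Qᵀ = Q) (hR : Rᵀ = R) :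
    ∀ k, (riccati A B Q R k)ᵀ = riccati A B Q R k := by
  intro k
  induction k with
  | zero => simp [riccati]
  | succ k ih =>
    have hS : (Bᵀ * riccati A B Q R k * B + R)ᵀ = Bᵀ * riccati A B Q R k * B + R := by
      simp [Matrix.transpose_add, Matrix.transpose_mul, Matrix.mul_assoc, ih, hR]
    have hSi : ((Bᵀ * riccati A B Q R k * B + R)⁻¹)ᵀ = (Bᵀ * riccati A B Q R k * B + R)⁻¹ := by
      rw [Matrix.transpose_nonsing_inv, hS]
    show (Aᵀ * riccati A B Q R k * A -
        Aᵀ * riccati A B Q R k * B * (Bᵀ * riccati A B Q R k * B + R)⁻¹ *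
          Bᵀ * riccati A B Q R k * A + Q)ᵀ = _
    simp only [Matrix.transpose_add, Matrix.transpose_sub, Matrix.transpose_mul,
      Matrix.transpose_transpose, hSi, ih, hQ]
    show _ = Aᵀ * riccati A B Q R k * A -
        Aᵀ * riccati A B Q R k * B * (Bᵀ * riccati A B Q R k * B + R)⁻¹ *
          Bᵀ * riccati A B Q R k * A + Q
    simp [Matrix.mul_assoc]

lemma S_posDef (hR : R.PosDef) {P : Matrix (Fin n) (Fin n) ℝ} (hP : P.PosSemidef) :
    (Bᵀ * P * B + R).PosDef := by
  have h1 : (Bᵀ * P * B).PosSemidef := by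
    have := hP.conjTranspose_mul_mul_same B
    rwa [Matrix.conjTranspose_eq_transpose_of_trivial] at this
  exact Matrix.PosDef.posSemidef_add h1 hR

lemma S_inv_facts (hR : R.PosDef) {P : Matrix (Fin n) (Fin n) ℝ} (hP : P.PosSemidef) :
    (Bᵀ * P * B + R) * (Bᵀ * P * B + R)⁻¹ = 1 ∧
    (Bᵀ * P * B + R)⁻¹ * (Bᵀ * P * B + R) = 1 := by
  have hpd := S_posDef B hR hP
  have hdet : IsUnit (Bᵀ * P * B + R).det := (Matrix.isUnit_iff_isUnit_det _).mp hpd.isUnit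
  exact ⟨Matrix.mul_nonsing_inv _ hdet, Matrix.nonsing_inv_mul _ hdet⟩

lemma riccati_posSemidef (hQ : Q.PosDef) (hR : R.PosDef) :
    ∀ k, (riccati A B Q R k).PosSemidef := by
  intro k
  induction k with
  | zero => exact ⟨by simp [riccati, Matrix.IsHermitian], by simp [riccati]⟩
  | succ k ih =>
    have hsym := riccati_symm A B (symm_of_herm hQ.isHermitian) (symm_of_herm hR.isHermitian)
      (k + 1)
    refine Matrix.PosSemidef.of_dotProduct_mulVec_nonneg ?_ (fun y => ?_)
    · rw [Matrix.IsHermitian, Matrix.conjTranspose_eq_transpose_of_trivial, hsym]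
    · have hPsym := riccati_symm A B (symm_of_herm hQ.isHermitian)
        (symm_of_herm hR.isHermitian) k
      have hRsym : Rᵀ = R := symm_of_herm hR.isHermitian
      obtain ⟨hS1, hS2⟩ := S_inv_facts B hR ih
      set P := riccati A B Q R k
      set K := (Bᵀ * P * B + R)⁻¹ * Bᵀ * P * A
      have key := complete_square A B Q P R hPsym hRsym hS1 hS2 y (-(K *ᵥ y))
      rw [neg_add_cancel] at key
      simp only [Matrix.mulVec_zero, dotProduct_zero, add_zero] at key
      have h1 : 0 ≤ y ⬝ᵥ (Q *ᵥ y) := by simpa only [star_trivial] using hQ.posSemidef.dotProduct_mulVec_nonneg y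
      have h2 : 0 ≤ (-(K *ᵥ y)) ⬝ᵥ (R *ᵥ (-(K *ᵥ y))) := by simpa only [star_trivial] using hR.posSemidef.dotProduct_mulVec_nonneg _
      have h3 : 0 ≤ (A *ᵥ y + B *ᵥ (-(K *ᵥ y))) ⬝ᵥ (P *ᵥ (A *ᵥ y + B *ᵥ (-(K *ᵥ y)))) := by
        simpa only [star_trivial] using ih.dotProduct_mulVec_nonneg _
      show (0:ℝ) ≤ y ⬝ᵥ ((Aᵀ * P * A - Aᵀ * P * B * (Bᵀ * P * B + R)⁻¹ * Bᵀ * P * A + Q) *ᵥ y)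
      rw [key]; positivity


lemma riccati_unfold (Q : Matrix (Fin n) (Fin n) ℝ) (R : Matrix (Fin m) (Fin m) ℝ) (k : ℕ) :
    riccati A B Q R (k + 1) =
      Aᵀ * riccati A B Q R k * A -
        Aᵀ * riccati A B Q R k * B * (Bᵀ * riccati A B Q R k * B + R)⁻¹ *
          Bᵀ * riccati A B Q R k * A + Q := by
  rw [riccati]

lemma riccati_ge_Q (hQ : Q.PosDef) (hR : R.PosDef) (k : ℕ) (y : Fin n → ℝ) :
    y ⬝ᵥ (Q *ᵥ y) ≤ y ⬝ᵥ (riccati A B Q R (k + 1) *ᵥ y) := by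
  have ih := riccati_posSemidef A B hQ hR k
  have hPsym := riccati_symm A B (symm_of_herm hQ.isHermitian) (symm_of_herm hR.isHermitian) k
  have hRsym : Rᵀ = R := symm_of_herm hR.isHermitian
  obtain ⟨hS1, hS2⟩ := S_inv_facts B hR ih
  set P := riccati A B Q R k
  set K := (Bᵀ * P * B + R)⁻¹ * Bᵀ * P * A
  have key := complete_square A B Q P R hPsym hRsym hS1 hS2 y (-(K *ᵥ y))
  rw [neg_add_cancel] at key
  simp only [Matrix.mulVec_zero, dotProduct_zero, add_zero] at key
  have h2 : 0 ≤ (-(K *ᵥ y)) ⬝ᵥ (R *ᵥ (-(K *ᵥ y))) := by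
    simpa only [star_trivial] using hR.posSemidef.dotProduct_mulVec_nonneg _
  have h3 : 0 ≤ (A *ᵥ y + B *ᵥ (-(K *ᵥ y))) ⬝ᵥ (P *ᵥ (A *ᵥ y + B *ᵥ (-(K *ᵥ y)))) := by
    simpa only [star_trivial] using ih.dotProduct_mulVec_nonneg _
  rw [riccati_unfold]
  rw [key]
  linarith

lemma riccati_qf_le {Q' : Matrix (Fin n) (Fin n) ℝ} {R' : Matrix (Fin m) (Fin m) ℝ}
    (hQpd : Q.PosDef) (hRpd : R.PosDef) (hQ'pd : Q'.PosDef) (hR'pd : R'.PosDef)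
    (c : ℝ) (hc : 0 < c)
    (hQc : ∀ y, y ⬝ᵥ (Q' *ᵥ y) ≤ c * (y ⬝ᵥ (Q *ᵥ y)))
    (hRc : ∀ w : Fin m → ℝ, w ⬝ᵥ (R' *ᵥ w) ≤ c * (w ⬝ᵥ (R *ᵥ w))) :
    ∀ k (y : Fin n → ℝ),
      y ⬝ᵥ (riccati A B Q' R' k *ᵥ y) ≤ c * (y ⬝ᵥ (riccati A B Q R k *ᵥ y)) := by
  intro k
  induction k with
  | zero => intro y; simp [riccati]
  | succ k ih =>
    intro y
    have hP := riccati_posSemidef A B hQpd hRpd k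
    have hP' := riccati_posSemidef A B hQ'pd hR'pd k
    have hPsym := riccati_symm A B (symm_of_herm hQpd.isHermitian)
      (symm_of_herm hRpd.isHermitian) k
    have hP'sym := riccati_symm A B (symm_of_herm hQ'pd.isHermitian)
      (symm_of_herm hR'pd.isHermitian) k
    have hRsym : Rᵀ = R := symm_of_herm hRpd.isHermitian
    have hR'sym : R'ᵀ = R' := symm_of_herm hR'pd.isHermitian
    obtain ⟨hS1, hS2⟩ := S_inv_facts B hRpd hP
    obtain ⟨hS1', hS2'⟩ := S_inv_facts B hR'pd hP'
    set P := riccati A B Q R k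
    set P' := riccati A B Q' R' k
    set K := (Bᵀ * P * B + R)⁻¹ * Bᵀ * P * A with hK
    set uu := -(K *ᵥ y) with huu
    set z := A *ᵥ y + B *ᵥ uu with hz
    -- optimal value for unprimed
    have key := complete_square A B Q P R hPsym hRsym hS1 hS2 y uu
    rw [huu, neg_add_cancel] at key
    simp only [Matrix.mulVec_zero, dotProduct_zero, add_zero] at key
    -- suboptimal bound for primed
    have key' := complete_square A B Q' P' R' hP'sym hR'sym hS1' hS2' y uu
    have hsq : 0 ≤ (uu + ((Bᵀ * P' * B + R')⁻¹ * Bᵀ * P' * A) *ᵥ y) ⬝ᵥ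
        ((Bᵀ * P' * B + R') *ᵥ (uu + ((Bᵀ * P' * B + R')⁻¹ * Bᵀ * P' * A) *ᵥ y)) := by
      simpa only [star_trivial] using (S_posDef B hR'pd hP').posSemidef.dotProduct_mulVec_nonneg _
    have hub : y ⬝ᵥ ((Aᵀ * P' * A - Aᵀ * P' * B * (Bᵀ * P' * B + R')⁻¹ * Bᵀ * P' * A + Q') *ᵥ y)
        ≤ y ⬝ᵥ (Q' *ᵥ y) + uu ⬝ᵥ (R' *ᵥ uu) + z ⬝ᵥ (P' *ᵥ z) := by
      rw [hz]; linarith [key', hsq]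
    have h1 := hQc y
    have h2 := hRc uu
    have h3 := ih z
    rw [riccati_unfold, riccati_unfold]
    calc y ⬝ᵥ ((Aᵀ * P' * A - Aᵀ * P' * B * (Bᵀ * P' * B + R')⁻¹ * Bᵀ * P' * A + Q') *ᵥ y)
        ≤ y ⬝ᵥ (Q' *ᵥ y) + uu ⬝ᵥ (R' *ᵥ uu) + z ⬝ᵥ (P' *ᵥ z) := hub
      _ ≤ c * (y ⬝ᵥ (Q *ᵥ y)) + c * (uu ⬝ᵥ (R *ᵥ uu)) + c * (z ⬝ᵥ (P *ᵥ z)) := by linarith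
      _ = c * (y ⬝ᵥ (Q *ᵥ y) + uu ⬝ᵥ (R *ᵥ uu) + z ⬝ᵥ (P *ᵥ z)) := by ring
      _ = c * (y ⬝ᵥ ((Aᵀ * P * A - Aᵀ * P * B * (Bᵀ * P * B + R)⁻¹ * Bᵀ * P * A + Q) *ᵥ y)) := by
          rw [key, hz]

end MPCAux

open MPCAux in
/-- Appendix Lemma 2(b): if the contraction factor `γ = (1−ρ)α/(1−δ)` is less than 1 and
the weights are uniformly bounded below, the MPC closed loop converges to the origin. -/
theorem mpc_closed_loop_stable {n m : ℕ}
    (A : Matrix (Fin n) (Fin n) ℝ) (B : Matrix (Fin n) (Fin m) ℝ)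
    (T : ℕ) (hT : 1 ≤ T) (δ : ℝ) (hδ0 : 0 ≤ δ) (hδ1 : δ < 1)
    (Q : ℕ → Matrix (Fin n) (Fin n) ℝ) (R : ℕ → Matrix (Fin m) (Fin m) ℝ)
    (hQpd : ∀ t, (Q t).PosDef) (hRpd : ∀ t, (R t).PosDef)
    (hQlow : ∀ t, loewnerLE ((1 - δ) • Q t) (Q (t + 1)))
    (hQhigh : ∀ t, loewnerLE (Q (t + 1)) ((1 + δ) • Q t))
    (hRlow : ∀ t, loewnerLE ((1 - δ) • R t) (R (t + 1)))
    (hRhigh : ∀ t, loewnerLE (R (t + 1)) ((1 + δ) • R t))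
    (x : ℕ → Fin n → ℝ) (u : ℕ → Fin m → ℝ)
    (hu : ∀ t, u t = -(((Bᵀ * riccati A B (Q t) (R t) (T - 1) * B + R t)⁻¹ *
        Bᵀ * riccati A B (Q t) (R t) (T - 1) * A) *ᵥ x t))
    (hx : ∀ t, x (t + 1) = A *ᵥ x t + B *ᵥ u t)
    (ρ : ℝ) (hρ0 : 0 < ρ) (hρ1 : ρ < 1)
    (hρP : ∀ t, loewnerLE (ρ • riccati A B (Q t) (R t) T) (Q t))
    (α : ℝ) (hα : 1 < α)
    (hαP : ∀ t, loewnerLE (riccati A B (Q t) (R t) T)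
      (α • riccati A B (Q t) (R t) (T - 1)))
    (γ : ℝ) (hγ : γ = (1 - ρ) * α / (1 - δ)) (hγ1 : γ < 1)
    (Qlb : Matrix (Fin n) (Fin n) ℝ) (hQlb : Qlb.PosDef)
    (hlb : ∀ t, loewnerLE Qlb (Q t)) :
    Filter.Tendsto x Filter.atTop (nhds 0) := by
  obtain ⟨T', rfl⟩ : ∃ T', T = T' + 1 := ⟨T - 1, (Nat.succ_pred_eq_of_pos hT).symm⟩
  have hT1 : T' + 1 - 1 = T' := rfl
  rw [hT1] at hu hαP
  have hQsym : ∀ t, (Q t)ᵀ = Q t := fun t => symm_of_herm (hQpd t).isHermitian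
  have hRsym : ∀ t, (R t)ᵀ = R t := fun t => symm_of_herm (hRpd t).isHermitian
  have hPsd : ∀ t k, (riccati A B (Q t) (R t) k).PosSemidef :=
    fun t k => riccati_posSemidef A B (hQpd t) (hRpd t) k
  set V : ℕ → ℝ := fun t => x t ⬝ᵥ (riccati A B (Q t) (R t) (T' + 1) *ᵥ x t) with hV
  have hV0 : ∀ t, 0 ≤ V t := fun t => by
    simpa only [star_trivial] using (hPsd t (T' + 1)).dotProduct_mulVec_nonneg (x t)
  -- one-step decrease
  have hstep : ∀ t, V (t + 1) ≤ γ * V t := by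
    intro t
    obtain ⟨hS1, hS2⟩ := S_inv_facts B (hRpd t) (hPsd t T')
    have key := complete_square A B (Q t) (riccati A B (Q t) (R t) T') (R t)
      (riccati_symm A B (hQsym t) (hRsym t) T') (hRsym t) hS1 hS2 (x t) (u t)
    have hu0 : u t + ((Bᵀ * riccati A B (Q t) (R t) T' * B + R t)⁻¹ *
        Bᵀ * riccati A B (Q t) (R t) T' * A) *ᵥ x t = 0 := by
      rw [hu t]; exact neg_add_cancel _
    rw [hu0] at key
    simp only [Matrix.mulVec_zero, dotProduct_zero, add_zero] at key
    rw [← hx t] at key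
    -- key : x t ⬝ᵥ (unfolded riccati (T'+1) at t *ᵥ x t) = qQ + qR + q1
    have hkey2 : V t = x t ⬝ᵥ (Q t *ᵥ x t) + u t ⬝ᵥ (R t *ᵥ u t)
        + x (t+1) ⬝ᵥ (riccati A B (Q t) (R t) T' *ᵥ x (t+1)) := by
      show x t ⬝ᵥ (riccati A B (Q t) (R t) (T' + 1) *ᵥ x t) = _
      rw [riccati_unfold]; exact key
    have hqQ : ρ * V t ≤ x t ⬝ᵥ (Q t *ᵥ x t) := by
      have := loewner_qf (hρP t) (x t)
      rwa [qf_smul] at this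
    have hqR : 0 ≤ u t ⬝ᵥ (R t *ᵥ u t) := by
      simpa only [star_trivial] using (hRpd t).posSemidef.dotProduct_mulVec_nonneg (u t)
    have hq1 : x (t+1) ⬝ᵥ (riccati A B (Q t) (R t) T' *ᵥ x (t+1)) ≤ (1 - ρ) * V t := by
      nlinarith [hkey2, hqQ, hqR]
    -- change weights from t to t+1
    have hQc : ∀ y, y ⬝ᵥ (Q (t+1) *ᵥ y) ≤ (1 + δ) * (y ⬝ᵥ (Q t *ᵥ y)) := fun y => by
      have := loewner_qf (hQhigh t) y; rwa [qf_smul] at this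
    have hRc : ∀ w, w ⬝ᵥ (R (t+1) *ᵥ w) ≤ (1 + δ) * (w ⬝ᵥ (R t *ᵥ w)) := fun w => by
      have := loewner_qf (hRhigh t) w; rwa [qf_smul] at this
    have hq2 : x (t+1) ⬝ᵥ (riccati A B (Q (t+1)) (R (t+1)) T' *ᵥ x (t+1))
        ≤ (1 + δ) * (x (t+1) ⬝ᵥ (riccati A B (Q t) (R t) T' *ᵥ x (t+1))) :=
      riccati_qf_le A B (hQpd t) (hRpd t) (hQpd (t+1)) (hRpd (t+1)) (1 + δ)
        (by linarith) hQc hRc T' (x (t+1))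
    have hαV : V (t+1) ≤ α * (x (t+1) ⬝ᵥ (riccati A B (Q (t+1)) (R (t+1)) T' *ᵥ x (t+1))) := by
      have := loewner_qf (hαP (t+1)) (x (t+1))
      rwa [qf_smul] at this
    have hα0 : (0:ℝ) ≤ α := by linarith
    have hq10 : 0 ≤ x (t+1) ⬝ᵥ (riccati A B (Q t) (R t) T' *ᵥ x (t+1)) := by
      simpa only [star_trivial] using (hPsd t T').dotProduct_mulVec_nonneg (x (t+1))
    have hchain : V (t+1) ≤ α * ((1 + δ) * ((1 - ρ) * V t)) := by
      have h4 : x (t+1) ⬝ᵥ (riccati A B (Q (t+1)) (R (t+1)) T' *ᵥ x (t+1))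
          ≤ (1 + δ) * ((1 - ρ) * V t) := by nlinarith [hq2, hq1]
      nlinarith [hαV, h4]
    have hfin : α * ((1 + δ) * ((1 - ρ) * V t)) ≤ γ * V t := by
      rw [hγ, div_mul_eq_mul_div, le_div_iff₀ (by linarith : (0:ℝ) < 1 - δ)]
      nlinarith [mul_nonneg (mul_nonneg (mul_nonneg hα0 (by linarith : (0:ℝ) ≤ 1 - ρ))
        (hV0 t)) (sq_nonneg δ)]
    linarith
  have hγ0 : 0 ≤ γ := by
    rw [hγ]
    apply div_nonneg _ (by linarith)
    nlinarith
  have hgeo : ∀ t, V t ≤ γ ^ t * V 0 := by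
    intro t
    induction t with
    | zero => simp
    | succ t ih =>
      calc V (t+1) ≤ γ * V t := hstep t
        _ ≤ γ * (γ ^ t * V 0) := mul_le_mul_of_nonneg_left ih hγ0
        _ = γ ^ (t+1) * V 0 := by ring
  have hgeo0 : Filter.Tendsto (fun t => γ ^ t * V 0) Filter.atTop (nhds 0) := by
    have := (tendsto_pow_atTop_nhds_zero_of_lt_one hγ0 hγ1).mul_const (V 0)
    simpa using this
  have hQlbV : ∀ t, x t ⬝ᵥ (Qlb *ᵥ x t) ≤ V t := fun t =>
    le_trans (loewner_qf (hlb t) (x t))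
      (riccati_ge_Q A B (hQpd t) (hRpd t) T' (x t))
  have hQlb0 : ∀ t, 0 ≤ x t ⬝ᵥ (Qlb *ᵥ x t) := fun t => by
    simpa only [star_trivial] using hQlb.posSemidef.dotProduct_mulVec_nonneg (x t)
  have hf0 : Filter.Tendsto (fun t => x t ⬝ᵥ (Qlb *ᵥ x t)) Filter.atTop (nhds 0) :=
    squeeze_zero hQlb0 (fun t => le_trans (hQlbV t) (hgeo t)) hgeo0
  -- coercivity of the quadratic form of Qlb
  rcases Nat.eq_zero_or_pos n with hn | hn
  · subst hn
    have hx0 : x = fun _ => 0 := funext fun t => funext fun i => Fin.elim0 i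
    rw [hx0]
    exact tendsto_const_nhds
  · haveI : Nonempty (Fin n) := Fin.pos_iff_nonempty.mp hn
    set f : (Fin n → ℝ) → ℝ := fun y => y ⬝ᵥ (Qlb *ᵥ y) with hf
    have hfc : Continuous f := by
      have : f = fun y => ∑ i, y i * ∑ j, Qlb i j * y j := by
        funext y
        simp [hf, dotProduct, Matrix.mulVec]
      rw [this]
      exact continuous_finset_sum _ fun i _ => (continuous_apply i).mul
        (continuous_finset_sum _ fun j _ => continuous_const.mul (continuous_apply j))
    obtain ⟨y0, hy0⟩ := exists_norm_eq (Fin n → ℝ) (zero_le_one)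
    have hy0mem : y0 ∈ Metric.sphere (0 : Fin n → ℝ) 1 := by
      simpa [mem_sphere_zero_iff_norm] using hy0
    obtain ⟨z, hz, hmin⟩ := (isCompact_sphere (0 : Fin n → ℝ) 1).exists_isMinOn
      ⟨y0, hy0mem⟩ hfc.continuousOn
    have hznorm : ‖z‖ = 1 := mem_sphere_zero_iff_norm.mp hz
    have hzne : z ≠ 0 := by
      intro h; rw [h, norm_zero] at hznorm; exact one_ne_zero hznorm.symm
    have hcpos : 0 < f z := by
      simpa only [star_trivial] using hQlb.dotProduct_mulVec_pos hzne
    have fhom : ∀ (a : ℝ) (w : Fin n → ℝ), f (a • w) = a ^ 2 * f w := by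
      intro a w
      simp only [hf, Matrix.mulVec_smul, smul_dotProduct, dotProduct_smul, smul_eq_mul]
      ring
    have hcoer : ∀ y, f z * ‖y‖ ^ 2 ≤ f y := by
      intro y
      by_cases hy : y = 0
      · simp [hy, hf]
      · have hyn : 0 < ‖y‖ := norm_pos_iff.mpr hy
        set w := ‖y‖⁻¹ • y with hw
        have hwmem : w ∈ Metric.sphere (0 : Fin n → ℝ) 1 := by
          rw [mem_sphere_zero_iff_norm, hw, norm_smul, norm_inv, norm_norm,
            inv_mul_cancel₀ hyn.ne']
        have hfw : f z ≤ f w := hmin hwmem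
        have hfww : f w = ‖y‖⁻¹ ^ 2 * f y := by rw [hw, fhom]
        calc f z * ‖y‖ ^ 2 ≤ f w * ‖y‖ ^ 2 :=
              mul_le_mul_of_nonneg_right hfw (sq_nonneg _)
          _ = ‖y‖⁻¹ ^ 2 * f y * ‖y‖ ^ 2 := by rw [hfww]
          _ = f y := by field_simp
    have hnorm2 : Filter.Tendsto (fun t => ‖x t‖ ^ 2) Filter.atTop (nhds 0) := by
      have hlim : Filter.Tendsto (fun t => (f z)⁻¹ * f (x t)) Filter.atTop (nhds 0) := by
        have := hf0.const_mul (f z)⁻¹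
        simpa using this
      apply squeeze_zero (fun t => sq_nonneg _) _ hlim
      intro t
      have h1 := hcoer (x t)
      calc ‖x t‖ ^ 2 = (f z)⁻¹ * (f z * ‖x t‖ ^ 2) := by field_simp
        _ ≤ (f z)⁻¹ * f (x t) := mul_le_mul_of_nonneg_left h1 (inv_nonneg.mpr hcpos.le)
    have heq : (fun t => Real.sqrt (‖x t‖ ^ 2)) = fun t => ‖x t‖ :=
      funext fun t => Real.sqrt_sq (norm_nonneg _)
    have h1 : Filter.Tendsto (fun t => Real.sqrt (‖x t‖ ^ 2)) Filter.atTop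
        (nhds (Real.sqrt 0)) := (Real.continuous_sqrt.tendsto _).comp hnorm2
    rw [heq, Real.sqrt_zero] at h1
    exact tendsto_zero_iff_norm_tendsto_zero.mpr h1
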